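/- The 13 Yu–Oh projectors statistically distinguish any two distinct real rays of the qutrit: for any two one-dimensional subspaces L ≠ L' of EuclideanSpace ℂ (Fin 3), each spanned by a vector with real entries, there exist i : Fin 13 and unit vectors w ∈ L, w' ∈ L' such that the Born probabilities differ, ‖Pᵢ w‖ ≠ ‖Pᵢ w'‖. -/

import Mathlib

open scoped InnerProductSpace

noncomputable def v : Fin 13 → EuclideanSpace ℂ (Fin 3) :=
  ![!₂[1, 0, 0], !₂[0, 1, 0], !₂[0, 0, 1],
    !₂[0, 1, -1], !₂[0, 1, 1], !₂[1, 0, -1], !₂[1, 0, 1], !₂[1, -1, 0], !₂[1, 1, 0],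
    !₂[1, 1, 1], !₂[-1, 1, 1], !₂[1, -1, 1], !₂[1, 1, -1]]

noncomputable def P (i : Fin 13) (w : EuclideanSpace ℂ (Fin 3)) : EuclideanSpace ℂ (Fin 3) :=
  (Submodule.orthogonalProjectionOnto (Submodule.span ℂ {v i}) w : EuclideanSpace ℂ (Fin 3))

private lemma key3 (x y z x' y' z' : ℝ)
    (h1 : x^2 = x'^2) (h2 : y^2 = y'^2) (h3 : z^2 = z'^2)
    (hxy : x*y = x'*y') (hxz : x*z = x'*z') (hyz : y*z = y'*z') :
    (x' = x ∧ y' = y ∧ z' = z) ∨ (x' = -x ∧ y' = -y ∧ z' = -z) := by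
  have pm : ∀ a b : ℝ, a^2 = b^2 → b = a ∨ b = -a := by
    intro a b h
    have h' : (b - a) * (b + a) = 0 := by nlinarith
    rcases mul_eq_zero.mp h' with h'' | h''
    · left; linarith
    · right; linarith
  by_cases hx : x = 0
  · have hx' : x' = 0 := by rcases pm x x' h1 with h | h <;> simp [hx] at h <;> simp [h]
    by_cases hy : y = 0
    · have hy' : y' = 0 := by rcases pm y y' h2 with h | h <;> simp [hy] at h <;> simp [h]
      rcases pm z z' h3 with h | h
      · left; exact ⟨by simp [hx, hx'], by simp [hy, hy'], h⟩
      · right; exact ⟨by simp [hx, hx'], by simp [hy, hy'], h⟩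
    · rcases pm y y' h2 with h | h
      · left
        refine ⟨by simp [hx, hx'], h, ?_⟩
        have : y * z = y * z' := by rw [hyz, h]
        exact (mul_left_cancel₀ hy this).symm
      · right
        refine ⟨by simp [hx, hx'], h, ?_⟩
        have : y * z = y * (-z') := by rw [hyz, h]; ring
        have := mul_left_cancel₀ hy this
        linarith
  · rcases pm x x' h1 with h | h
    · left
      refine ⟨h, ?_, ?_⟩
      · have : x * y = x * y' := by rw [hxy, h]
        exact (mul_left_cancel₀ hx this).symm
      · have : x * z = x * z' := by rw [hxz, h]
        exact (mul_left_cancel₀ hx this).symm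
    · right
      refine ⟨h, ?_, ?_⟩
      · have : x * y = x * (-y') := by rw [hxy, h]; ring
        have := mul_left_cancel₀ hx this
        linarith
      · have : x * z = x * (-z') := by rw [hxz, h]; ring
        have := mul_left_cancel₀ hx this
        linarith

private lemma normP (i : Fin 13) (hv : v i ≠ 0) (x : EuclideanSpace ℂ (Fin 3)) :
    ‖P i x‖ = ‖⟪v i, x⟫_ℂ‖ / ‖v i‖ := by
  have hn : ‖v i‖ ≠ 0 := norm_ne_zero_iff.mpr hv
  rw [P, ← Submodule.starProjection_apply, Submodule.starProjection_singleton, norm_smul]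
  rw [norm_div]
  simp only [RCLike.norm_ofReal, abs_pow, abs_norm]
  field_simp

theorem yu_oh_distinguishes_real_rays
    (L L' : Submodule ℂ (EuclideanSpace ℂ (Fin 3)))
    (hL : ∃ w : EuclideanSpace ℂ (Fin 3), w ≠ 0 ∧
      (∀ k : Fin 3, (starRingEnd ℂ) (w k) = w k) ∧ L = Submodule.span ℂ {w})
    (hL' : ∃ w : EuclideanSpace ℂ (Fin 3), w ≠ 0 ∧
      (∀ k : Fin 3, (starRingEnd ℂ) (w k) = w k) ∧ L' = Submodule.span ℂ {w})
    (hne : L ≠ L') :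
    ∃ (i : Fin 13) (w w' : EuclideanSpace ℂ (Fin 3)),
      w ∈ L ∧ ‖w‖ = 1 ∧ w' ∈ L' ∧ ‖w'‖ = 1 ∧ ‖P i w‖ ≠ ‖P i w'‖ := by
  obtain ⟨u, hu0, hureal, hLdef⟩ := hL
  obtain ⟨u', hu'0, hu'real, hL'def⟩ := hL'
  set w : EuclideanSpace ℂ (Fin 3) := ((‖u‖ : ℂ))⁻¹ • u with hwdef
  set w' : EuclideanSpace ℂ (Fin 3) := ((‖u'‖ : ℂ))⁻¹ • u' with hw'def
  have hsmul_ne : ((‖u‖ : ℂ))⁻¹ ≠ 0 := by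
    simp [norm_ne_zero_iff.mpr hu0]
  have hsmul'_ne : ((‖u'‖ : ℂ))⁻¹ ≠ 0 := by
    simp [norm_ne_zero_iff.mpr hu'0]
  have hspanw : Submodule.span ℂ {w} = L := by
    rw [hLdef, hwdef]
    exact Submodule.span_singleton_smul_eq (isUnit_iff_ne_zero.mpr hsmul_ne) u
  have hspanw' : Submodule.span ℂ {w'} = L' := by
    rw [hL'def, hw'def]
    exact Submodule.span_singleton_smul_eq (isUnit_iff_ne_zero.mpr hsmul'_ne) u'
  have hwmem : w ∈ L := hspanw ▸ Submodule.mem_span_singleton_self w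
  have hw'mem : w' ∈ L' := hspanw' ▸ Submodule.mem_span_singleton_self w'
  have hwnorm : ‖w‖ = 1 := norm_smul_inv_norm hu0
  have hw'norm : ‖w'‖ = 1 := norm_smul_inv_norm hu'0
  have hwreal : ∀ k, w k = (((w k).re : ℝ) : ℂ) := by
    intro k
    have : (starRingEnd ℂ) (w k) = w k := by
      have : w k = ((‖u‖ : ℂ))⁻¹ * u k := rfl
      rw [this, map_mul, map_inv₀, Complex.conj_ofReal, hureal k]
    exact (Complex.conj_eq_iff_re.mp this).symm
  have hw'real : ∀ k, w' k = (((w' k).re : ℝ) : ℂ) := by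
    intro k
    have : (starRingEnd ℂ) (w' k) = w' k := by
      have : w' k = ((‖u'‖ : ℂ))⁻¹ * u' k := rfl
      rw [this, map_mul, map_inv₀, Complex.conj_ofReal, hu'real k]
    exact (Complex.conj_eq_iff_re.mp this).symm
  set a : Fin 3 → ℝ := fun k => (w k).re with ha
  set b : Fin 3 → ℝ := fun k => (w' k).re with hb
  by_contra hcon
  push_neg at hcon
  have hP : ∀ i, ‖P i w‖ = ‖P i w'‖ := fun i =>
    hcon i w w' hwmem hwnorm hw'mem hw'norm
  have hvne : ∀ i : Fin 13, v i ≠ 0 := by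
    intro i
    fin_cases i <;> intro h <;>
      first
        | (have := congrArg (fun y : EuclideanSpace ℂ (Fin 3) => y 0) h; norm_num [v, Matrix.cons_val_succ, Matrix.cons_val_two, Matrix.vecHead, Matrix.vecTail] at this; done)
        | (have := congrArg (fun y : EuclideanSpace ℂ (Fin 3) => y 1) h; norm_num [v, Matrix.cons_val_succ, Matrix.cons_val_two, Matrix.vecHead, Matrix.vecTail] at this; done)
        | (have := congrArg (fun y : EuclideanSpace ℂ (Fin 3) => y 2) h; norm_num [v, Matrix.cons_val_succ, Matrix.cons_val_two, Matrix.vecHead, Matrix.vecTail] at this; done)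
  have hinner : ∀ i, ‖⟪v i, w⟫_ℂ‖ = ‖⟪v i, w'⟫_ℂ‖ := by
    intro i
    have hn : ‖v i‖ ≠ 0 := norm_ne_zero_iff.mpr (hvne i)
    have := hP i
    rw [normP i (hvne i), normP i (hvne i), div_eq_div_iff hn hn] at this
    exact mul_right_cancel₀ hn this
  -- compute inner products
  have hcomp : ∀ (i : Fin 13) (x : EuclideanSpace ℂ (Fin 3)),
      ⟪v i, x⟫_ℂ = (starRingEnd ℂ) (v i 0) * x 0 + (starRingEnd ℂ) (v i 1) * x 1
        + (starRingEnd ℂ) (v i 2) * x 2 := by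
    intro i x
    simp [PiLp.inner_apply, Fin.sum_univ_three, RCLike.inner_apply]
    ring
  have habs : ∀ (c0 c1 c2 : ℝ),
      ‖((c0 * a 0 + c1 * a 1 + c2 * a 2 : ℝ) : ℂ)‖ =
      ‖((c0 * b 0 + c1 * b 1 + c2 * b 2 : ℝ) : ℂ)‖ →
      (c0 * a 0 + c1 * a 1 + c2 * a 2)^2 = (c0 * b 0 + c1 * b 1 + c2 * b 2)^2 := by
    intro c0 c1 c2 h
    rw [Complex.norm_real, Complex.norm_real, Real.norm_eq_abs, Real.norm_eq_abs] at h
    calc (c0 * a 0 + c1 * a 1 + c2 * a 2)^2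
        = |c0 * a 0 + c1 * a 1 + c2 * a 2|^2 := (sq_abs _).symm
      _ = |c0 * b 0 + c1 * b 1 + c2 * b 2|^2 := by rw [h]
      _ = (c0 * b 0 + c1 * b 1 + c2 * b 2)^2 := sq_abs _
  have key : ∀ (i : Fin 13) (c0 c1 c2 : ℝ),
      (∀ x : EuclideanSpace ℂ (Fin 3),
        ⟪v i, x⟫_ℂ = (c0 : ℂ) * x 0 + (c1 : ℂ) * x 1 + (c2 : ℂ) * x 2) →
      (c0 * a 0 + c1 * a 1 + c2 * a 2)^2 = (c0 * b 0 + c1 * b 1 + c2 * b 2)^2 := by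
    intro i c0 c1 c2 hf
    apply habs
    have e1 : ⟪v i, w⟫_ℂ = ((c0 * a 0 + c1 * a 1 + c2 * a 2 : ℝ) : ℂ) := by
      rw [hf w, hwreal 0, hwreal 1, hwreal 2]
      push_cast
      ring
    have e2 : ⟪v i, w'⟫_ℂ = ((c0 * b 0 + c1 * b 1 + c2 * b 2 : ℝ) : ℂ) := by
      rw [hf w', hw'real 0, hw'real 1, hw'real 2]
      push_cast
      ring
    rw [← e1, ← e2]
    exact hinner i
  have E1 := key 0 1 0 0 (fun x => by
    rw [hcomp, show v 0 = !₂[1, 0, 0] from rfl]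
    norm_num [Matrix.cons_val_two, Matrix.vecHead, Matrix.vecTail]
    try push_cast
    try ring)
  have E2 := key 1 0 1 0 (fun x => by
    rw [hcomp, show v 1 = !₂[0, 1, 0] from rfl]
    norm_num [Matrix.cons_val_two, Matrix.vecHead, Matrix.vecTail]
    try push_cast
    try ring)
  have E3 := key 2 0 0 1 (fun x => by
    rw [hcomp, show v 2 = !₂[0, 0, 1] from rfl]
    norm_num [Matrix.cons_val_two, Matrix.vecHead, Matrix.vecTail]
    try push_cast
    try ring)
  have E4 := key 3 0 1 (-1) (fun x => by
    rw [hcomp, show v 3 = !₂[0, 1, -1] from rfl]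
    norm_num [Matrix.cons_val_two, Matrix.vecHead, Matrix.vecTail]
    try push_cast
    try ring)
  have E5 := key 4 0 1 1 (fun x => by
    rw [hcomp, show v 4 = !₂[0, 1, 1] from rfl]
    norm_num [Matrix.cons_val_two, Matrix.vecHead, Matrix.vecTail]
    try push_cast
    try ring)
  have E6 := key 5 1 0 (-1) (fun x => by
    rw [hcomp, show v 5 = !₂[1, 0, -1] from rfl]
    norm_num [Matrix.cons_val_two, Matrix.vecHead, Matrix.vecTail]
    try push_cast
    try ring)
  have E7 := key 6 1 0 1 (fun x => by
    rw [hcomp, show v 6 = !₂[1, 0, 1] from rfl]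
    norm_num [Matrix.cons_val_two, Matrix.vecHead, Matrix.vecTail]
    try push_cast
    try ring)
  have E8 := key 7 1 (-1) 0 (fun x => by
    rw [hcomp, show v 7 = !₂[1, -1, 0] from rfl]
    norm_num [Matrix.cons_val_two, Matrix.vecHead, Matrix.vecTail]
    try push_cast
    try ring)
  have E9 := key 8 1 1 0 (fun x => by
    rw [hcomp, show v 8 = !₂[1, 1, 0] from rfl]
    norm_num [Matrix.cons_val_two, Matrix.vecHead, Matrix.vecTail]
    try push_cast
    try ring)
  simp only [one_mul, zero_mul, add_zero, zero_add, neg_mul, neg_neg] at E1 E2 E3 E4 E5 E6 E7 E8 E9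
  have p1 : a 0^2 = b 0^2 := by linear_combination E1
  have p2 : a 1^2 = b 1^2 := by linear_combination E2
  have p3 : a 2^2 = b 2^2 := by linear_combination E3
  have q12 : a 0 * a 1 = b 0 * b 1 := by linear_combination (E9 - E8)/4
  have q13 : a 0 * a 2 = b 0 * b 2 := by linear_combination (E7 - E6)/4
  have q23 : a 1 * a 2 = b 1 * b 2 := by linear_combination (E5 - E4)/4
  rcases key3 (a 0) (a 1) (a 2) (b 0) (b 1) (b 2) p1 p2 p3 q12 q13 q23 with
    ⟨c0, c1, c2⟩ | ⟨c0, c1, c2⟩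
  · apply hne
    rw [← hspanw, ← hspanw']
    have hab : ∀ k : Fin 3, b k = a k := by
      intro k
      fin_cases k
      · exact c0
      · exact c1
      · exact c2
    have hww : w' = w := by
      ext k
      rw [hwreal k, hw'real k]
      exact_mod_cast hab k
    rw [hww]
  · apply hne
    rw [← hspanw, ← hspanw']
    have hab : ∀ k : Fin 3, b k = -a k := by
      intro k
      fin_cases k
      · exact c0
      · exact c1
      · exact c2
    have hww : w' = -w := by
      ext k
      have hneg : (-w) k = -(w k) := rfl
      rw [hneg, hwreal k, hw'real k]
      have := hab k
      change (w' k).re = -(w k).re at this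
      rw [this]
      push_cast
      ring
    rw [hww, show -w = (-1 : ℂ) • w by simp,
      Submodule.span_singleton_smul_eq (by norm_num : IsUnit (-1 : ℂ)) w]
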